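/- If a position j in a sequence S over alphabet Σ belongs to an occurrence of a pattern P (i.e., there exists i with S[i..i+k-1] = P and i ≤ j ≤ i+k-1, where k = |P|), then substituting the character at position j creates at most one new occurrence of P. That is, there do not exist two distinct pairs (i₁,σ₁) and (i₂,σ₂) with i₁ ≠ i₂ such that replacing S[j] by σ₁ creates a new P-occurrence starting at i₁ and replacing S[j] by σ₂ creates a new P-occurrence starting at i₂ (the two substitute characters may be equal or distinct), where in each case the new occurrence was not present in S. -/

import Mathlib

private lemma list_occ_char {α : Type*} (S P : List α) (u : ℕ) (hP : 0 < P.length) :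
    P <+: S.drop u ↔ u + P.length ≤ S.length ∧ ∀ t : ℕ, t < P.length → S[u + t]? = P[t]? := by
  constructor
  · rintro ⟨T, hT⟩
    have hlen : (S.drop u).length = P.length + T.length := by
      rw [← hT]; simp
    have hlen' : u + P.length ≤ S.length := by
      rw [List.length_drop] at hlen
      omega
    refine ⟨hlen', fun t ht => ?_⟩
    have h1 : (S.drop u)[t]? = S[u + t]? := List.getElem?_drop
    rw [← h1, ← hT, List.getElem?_append]
    simp [ht]
  · rintro ⟨hlen, h⟩
    have hP : P = (S.drop u).take P.length := by
      apply List.ext_getElem?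
      intro n
      rw [List.getElem?_take]
      by_cases hn : n < P.length
      · simp only [hn, if_true]
        rw [List.getElem?_drop, h n hn]
      · simp only [hn, if_false]
        exact List.getElem?_eq_none (by omega)
    rw [List.prefix_iff_eq_take]
    exact hP

private lemma orbit_contra {β : Type*} (g : ℕ → β) (m q a : ℕ) (hm : 0 < m)
    (Edge : ∀ r : ℕ, r < m → r ≠ a % m → g ((r + q) % m) = g r)
    (hbrk : g ((a + q) % m) ≠ g (a % m)) : False := by
  set s : ℕ → ℕ := fun n => (a + n * q) % m with hs
  have s0 : s 0 = a % m := by simp [hs]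
  have sm : s m = a % m := by
    show (a + m * q) % m = a % m
    exact Nat.add_mul_mod_self_left a m q
  have sstep : ∀ n : ℕ, s (n + 1) = (s n + q) % m := by
    intro n
    show (a + (n + 1) * q) % m = ((a + n * q) % m + q) % m
    rw [Nat.mod_add_mod]
    congr 1
    ring
  have s1 : s 1 = (a + q) % m := by
    show (a + 1 * q) % m = (a + q) % m
    congr 1; ring
  have slt : ∀ n : ℕ, s n < m := fun n => Nat.mod_lt _ hm
  have C : ∀ n : ℕ, (∀ l : ℕ, 1 ≤ l → l ≤ n → s l ≠ a % m) → g (s (n + 1)) = g (s 1) := by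
    intro n
    induction n with
    | zero => intro _; rfl
    | succ n ih =>
      intro h
      have h1 : g (s (n + 1 + 1)) = g (s (n + 1)) := by
        rw [sstep (n + 1)]
        exact Edge (s (n + 1)) (slt _) (h (n + 1) (by omega) (by omega))
      rw [h1]
      exact ih (fun l hl1 hl2 => h l hl1 (by omega))
  have hex : ∃ l : ℕ, 0 < l ∧ s l = a % m := ⟨m, hm, sm⟩
  set N := Nat.find hex with hNdef
  have hNs := Nat.find_spec hex
  have hC := C (N - 1) (fun l hl1 hl2 he => by
    have hmin := Nat.find_min hex (show l < N by omega)
    exact hmin ⟨by omega, he⟩)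
  have hNe : N - 1 + 1 = N := by omega
  rw [hNe, hNs.2, s1] at hC
  exact hbrk hC.symm

private lemma cyclic_contra {β : Type*} (g : ℕ → β) (k a b₁ b₂ : ℕ)
    (h2a : b₂ < a) (hab : a < b₁) (hbk : b₁ < k)
    (F1 : ∀ t : ℕ, t + (b₁ - a) < k → t ≠ a → g (t + (b₁ - a)) = g t)
    (F2 : ∀ t : ℕ, t + (a - b₂) < k → t ≠ b₂ → g (t + (a - b₂)) = g t)
    (F3 : ∀ t : ℕ, t + (b₁ - b₂) < k → t ≠ b₂ → g (t + (b₁ - b₂)) = g t)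
    (E1 : g b₁ ≠ g a) : False := by
  set q := b₁ - a with hq
  set p := a - b₂ with hp
  set m := b₁ - b₂ with hm
  have hqpos : 0 < q := by omega
  have hppos : 0 < p := by omega
  have hmpq : m = p + q := by omega
  have hmk : m < k := by omega
  have F3' : ∀ t : ℕ, t + m < k → g (t + m) = g t := by
    intro t ht
    by_cases hb : t = b₂
    · rw [hb]
      have e1 : g (b₂ + q + p) = g (b₂ + q) := F2 _ (by omega) (by omega)
      have e2 : g (b₂ + q) = g b₂ := F1 b₂ (by omega) (by omega)
      have e3 : b₂ + q + p = b₂ + m := by omega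
      rw [e3] at e1
      rw [e1, e2]
    · exact F3 t ht hb
  have Fmod : ∀ t : ℕ, t < k → g t = g (t % m) := by
    intro t
    induction t using Nat.strong_induction_on with
    | _ t ih =>
      intro ht
      rcases lt_or_ge t m with h | h
      · rw [Nat.mod_eq_of_lt h]
      · have h1 : g (t - m + m) = g (t - m) := F3' _ (by omega)
        have h2 : t - m + m = t := by omega
        rw [h2] at h1
        rw [h1, ih (t - m) (by omega) (by omega), Nat.mod_eq_sub_mod h]
  have Edge : ∀ r : ℕ, r < m → r ≠ a % m → g ((r + q) % m) = g r := by
    intro r hrm hra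
    rcases lt_or_ge (r + q) k with h | h
    · have hr : r ≠ a := by
        intro he; subst he
        exact hra (Nat.mod_eq_of_lt hrm).symm
      rw [← Fmod (r + q) h]
      exact F1 r (by omega) hr
    · set t := (r + q) % m with htdef
      have hql : m ≤ r + q := by omega
      have htle : t ≤ r + q - m := by
        have h1 : t = (r + q - m) % m := by rw [htdef, Nat.mod_eq_sub_mod hql]
        rw [h1]
        exact Nat.mod_le _ _
      have htm : t < m := Nat.mod_lt _ (by omega)
      have htb : t ≠ b₂ := by
        intro he
        apply hra
        have haq : (a + q) % m = b₂ := by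
          have e : a + q = b₂ + m := by omega
          rw [e, Nat.add_mod_right, Nat.mod_eq_of_lt (by omega)]
        have h1 : (r + q) % m = (a + q) % m := by
          rw [← htdef, he, haq]
        have h2 : r ≡ a [MOD m] := Nat.ModEq.add_right_cancel' q h1
        rw [← Nat.mod_eq_of_lt hrm]
        exact h2
      have hF2 := F2 t (by omega) htb
      have htp : t + p = r := by
        have h1 : (t + p) % m = r := by
          rw [htdef, Nat.mod_add_mod]
          have e : r + q + p = r + m := by omega
          rw [e, Nat.add_mod_right, Nat.mod_eq_of_lt hrm]
        rw [← h1, Nat.mod_eq_of_lt (by omega)]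
      rw [htp] at hF2
      exact hF2.symm
  apply orbit_contra g m q a (by omega) Edge
  have e1 : (a + q) % m = b₂ % m := by
    have e : a + q = b₂ + m := by omega
    rw [e, Nat.add_mod_right]
  rw [e1, ← Fmod b₂ (by omega), ← Fmod a (by omega)]
  -- goal: g b₂ ≠ g a ; but E1 : g b₁ ≠ g a ; need g b₁ = g b₂
  have e2 : g b₁ = g b₂ := by
    have e3 : g (b₂ + q + p) = g (b₂ + q) := F2 _ (by omega) (by omega)
    have e4 : g (b₂ + q) = g b₂ := F1 b₂ (by omega) (by omega)
    have e5 : b₂ + q + p = b₁ := by omega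
    rw [e5] at e3
    rw [e3, e4]
  rw [← e2]
  exact E1

private lemma window_pair {α : Type*} (S P : List α) (k j u v : ℕ) (hk : P.length = k)
    (hju : u ≤ j) (hjv : v ≤ j)
    (hu : ∀ t : ℕ, t < k → t ≠ j - u → S[u + t]? = P[t]?)
    (hv : ∀ t : ℕ, t < k → t ≠ j - v → S[v + t]? = P[t]?)
    (x : ℕ) (hxu : u ≤ x) (hxv : v ≤ x) (hxku : x < u + k) (hxkv : x < v + k)
    (hxj : x ≠ j) :
    P[x - u]? = P[x - v]? := by
  have h1 := hu (x - u) (by omega) (by omega)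
  have h2 := hv (x - v) (by omega) (by omega)
  have e1 : u + (x - u) = x := by omega
  have e2 : v + (x - v) = x := by omega
  rw [e1] at h1; rw [e2] at h2
  rw [← h1, ← h2]

private lemma new_match_facts {α : Type*} (S P : List α) (k j u : ℕ) (hk : P.length = k)
    (hk1 : 1 ≤ k) (σ : α) (hs : P <+: (S.set j σ).drop u) (hn : ¬ P <+: S.drop u) :
    u + k ≤ S.length ∧ u ≤ j ∧ j < u + k ∧
      (∀ t : ℕ, t < k → t ≠ j - u → S[u + t]? = P[t]?) ∧ S[j]? ≠ P[j - u]? := by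
  rw [list_occ_char _ _ _ (by omega), hk] at hs
  obtain ⟨hlen, hwin⟩ := hs
  rw [List.length_set] at hlen
  have hW : ∀ t : ℕ, t < k → u + t ≠ j → S[u + t]? = P[t]? := by
    intro t ht hne
    rw [← hwin t ht, List.getElem?_set_ne (by omega)]
  have hj : u ≤ j ∧ j < u + k := by
    by_contra hcon
    apply hn
    rw [list_occ_char _ _ _ (by omega), hk]
    exact ⟨hlen, fun t ht => hW t ht (by omega)⟩
  refine ⟨hlen, hj.1, hj.2, fun t ht hne => hW t ht (by omega), ?_⟩
  intro he
  apply hn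
  rw [list_occ_char _ _ _ (by omega), hk]
  refine ⟨hlen, fun t ht => ?_⟩
  by_cases hb : t = j - u
  · subst hb
    rw [show u + (j - u) = j by omega]
    exact he
  · exact hW t ht (by omega)

private lemma core_case {α : Type*} (S P : List α) (k j i u v : ℕ) (hk : P.length = k)
    (hij : i ≤ j) (hij' : j < i + k)
    (hju : u ≤ j) (hju' : j < u + k)
    (hjv : v ≤ j) (hjv' : j < v + k)
    (huv : u < v) (hiu : i ≠ u) (hiv : i ≠ v)
    (hiW : ∀ t : ℕ, t < k → t ≠ j - i → S[i + t]? = P[t]?)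
    (hWu : ∀ t : ℕ, t < k → t ≠ j - u → S[u + t]? = P[t]?)
    (hWv : ∀ t : ℕ, t < k → t ≠ j - v → S[v + t]? = P[t]?)
    (hBu : P[j - u]? ≠ P[j - i]?)
    (hBv : P[j - v]? ≠ P[j - i]?) : False := by
  rcases lt_trichotomy i u with hA | hE | hB1
  · -- i < u < v
    have e1 := window_pair S P k j u v hk hju hjv hWu hWv (u + (j - i))
      (by omega) (by omega) (by omega) (by omega) (by omega)
    rw [show u + (j - i) - u = j - i by omega,
        show u + (j - i) - v = (j - i) - (v - u) by omega] at e1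
    have e2 := window_pair S P k j i u hk hij hju hiW hWu (i + ((j - i) - (v - u)))
      (by omega) (by omega) (by omega) (by omega) (by omega)
    rw [show i + ((j - i) - (v - u)) - i = (j - i) - (v - u) by omega,
        show i + ((j - i) - (v - u)) - u = j - v by omega] at e2
    exact hBv (e2.symm.trans e1.symm)
  · exact hiu hE
  · rcases lt_trichotomy i v with hBB | hE2 | hA2
    · -- u < i < v : the hard middle case
      have F1 : ∀ t : ℕ, t + ((j - u) - (j - i)) < k → t ≠ j - i →
          P[t + ((j - u) - (j - i))]? = P[t]? := by
        intro t ht htne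
        have e := window_pair S P k j u i hk hju hij hWu hiW (i + t)
          (by omega) (by omega) (by omega) (by omega) (by omega)
        rw [show i + t - u = t + ((j - u) - (j - i)) by omega,
            show i + t - i = t by omega] at e
        exact e
      have F2 : ∀ t : ℕ, t + ((j - i) - (j - v)) < k → t ≠ j - v →
          P[t + ((j - i) - (j - v))]? = P[t]? := by
        intro t ht htne
        have e := window_pair S P k j i v hk hij hjv hiW hWv (v + t)
          (by omega) (by omega) (by omega) (by omega) (by omega)
        rw [show v + t - i = t + ((j - i) - (j - v)) by omega,
            show v + t - v = t by omega] at e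
        exact e
      have F3 : ∀ t : ℕ, t + ((j - u) - (j - v)) < k → t ≠ j - v →
          P[t + ((j - u) - (j - v))]? = P[t]? := by
        intro t ht htne
        have e := window_pair S P k j u v hk hju hjv hWu hWv (v + t)
          (by omega) (by omega) (by omega) (by omega) (by omega)
        rw [show v + t - u = t + ((j - u) - (j - v)) by omega,
            show v + t - v = t by omega] at e
        exact e
      exact cyclic_contra (fun t => P[t]?) k (j - i) (j - u) (j - v)
        (by omega) (by omega) (by omega) F1 F2 F3 hBu
    · exact hiv hE2
    · -- u < v < i
      have e1 := window_pair S P k j u v hk hju hjv hWu hWv (v + (j - i))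
        (by omega) (by omega) (by omega) (by omega) (by omega)
      rw [show v + (j - i) - u = (j - i) + (v - u) by omega,
          show v + (j - i) - v = j - i by omega] at e1
      have e2 := window_pair S P k j v i hk hjv hij hWv hiW (v + (j - u))
        (by omega) (by omega) (by omega) (by omega) (by omega)
      rw [show v + (j - u) - v = j - u by omega,
          show v + (j - u) - i = (j - i) + (v - u) by omega] at e2
      exact hBu (e2.trans e1)

theorem single_substitution_creates_at_most_one_new_match
    {α : Type*} (S P : List α) (k : ℕ) (hk : P.length = k) (hk1 : 1 ≤ k) (j : ℕ)
    (hj : ∃ i, P <+: S.drop i ∧ i ≤ j ∧ j < i + k) :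
    ¬ ∃ (i₁ i₂ : ℕ) (σ₁ σ₂ : α), i₁ ≠ i₂ ∧
      (P <+: (S.set j σ₁).drop i₁ ∧ ¬ P <+: S.drop i₁) ∧
      (P <+: (S.set j σ₂).drop i₂ ∧ ¬ P <+: S.drop i₂) := by
  obtain ⟨i, hiP, hij1, hij2⟩ := hj
  rintro ⟨i₁, i₂, σ₁, σ₂, hne, ⟨h1s, h1n⟩, ⟨h2s, h2n⟩⟩
  rw [list_occ_char _ _ _ (by omega), hk] at hiP
  obtain ⟨hilen, hiW⟩ := hiP
  obtain ⟨hlen1, hj1, hj1', hW1, hB1⟩ := new_match_facts S P k j i₁ hk hk1 σ₁ h1s h1n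
  obtain ⟨hlen2, hj2, hj2', hW2, hB2⟩ := new_match_facts S P k j i₂ hk hk1 σ₂ h2s h2n
  have hSj : S[j]? = P[j - i]? := by
    have h := hiW (j - i) (by omega)
    rw [show i + (j - i) = j by omega] at h
    exact h
  have hB1' : P[j - i₁]? ≠ P[j - i]? := fun h => hB1 (hSj.trans h.symm)
  have hB2' : P[j - i₂]? ≠ P[j - i]? := fun h => hB2 (hSj.trans h.symm)
  have hiW' : ∀ t : ℕ, t < k → t ≠ j - i → S[i + t]? = P[t]? := fun t ht _ => hiW t ht
  have hii1 : i ≠ i₁ := by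
    intro he; rw [he] at hB1'; exact hB1' rfl
  have hii2 : i ≠ i₂ := by
    intro he; rw [he] at hB2'; exact hB2' rfl
  rcases lt_or_gt_of_ne hne with h12 | h21
  · exact core_case S P k j i i₁ i₂ hk hij1 hij2 hj1 hj1' hj2 hj2' h12 hii1 hii2
      hiW' hW1 hW2 hB1' hB2'
  · exact core_case S P k j i i₂ i₁ hk hij1 hij2 hj2 hj2' hj1 hj1' h21 hii2 hii1
      hiW' hW2 hW1 hB2' hB1'
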